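/- (Orthogonal projection formulation) Let E be a finite-dimensional real inner product space, k ≥ 1, and w₁,…,w_k, u ∈ E. Let P denote the orthogonal projection of E onto the orthogonal complement of span{w₁,…,w_k}. Then v₀(w₁,…,w_k,u) = det(Σ^{(w₁,…,w_k)}_{(w₁,…,w_k)}) · P(u). -/

import Mathlib

open scoped RealInnerProductSpace BigOperators

/-- `Σ^{(a₁,…,a_r)}_{(b₁,…,b_s)}`: the `r × s` real matrix whose `(i,j)` entry is `⟪b j, a i⟫`. -/
noncomputable def sigmaMat {E : Type*} [NormedAddCommGroup E] [InnerProductSpace ℝ E]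
    {r s : ℕ} (a : Fin r → E) (b : Fin s → E) : Matrix (Fin r) (Fin s) ℝ :=
  Matrix.of fun i j => ⟪b j, a i⟫

/-- The standard control vector `v₀(w₁,…,w_{k+1},u)`: there are `k+1` vectors `w`
(`k+1 ≥ 1` encodes the requirement that the number of `w`-vectors is at least one).
With `0`-indexing, the sign `(-1)^(i+k+1)` below is the paper's `(-1)^{i+k+1}` for
`1`-indexed `i` and `k+1` vectors. -/
noncomputable def stdControl {E : Type*} [NormedAddCommGroup E] [InnerProductSpace ℝ E]
    {k : ℕ} (w : Fin (k + 1) → E) (u : E) : E :=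
  (∑ i : Fin (k + 1),
      ((-1 : ℝ) ^ ((i : ℕ) + k + 1) *
        (sigmaMat w (Fin.snoc (w ∘ i.succAbove) u)).det) • w i) +
    (sigmaMat w w).det • u

lemma snoc_comp_succAbove_castSucc {α : Type*} {n : ℕ} (f : Fin (n + 1) → α) (x : α)
    (j : Fin (n + 1)) (l : Fin (n + 1)) :
    (Fin.snoc f x : Fin (n + 2) → α) ((Fin.castSucc j).succAbove l) =
      (Fin.snoc (f ∘ j.succAbove) x : Fin (n + 1) → α) l := by
  induction l using Fin.lastCases with
  | last =>
      have h1 : (Fin.castSucc j).succAbove (Fin.last n) = Fin.last (n + 1) := by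
        rw [Fin.succAbove_castSucc_of_le j (Fin.last n) (Fin.le_last j), Fin.succ_last]
      rw [h1, Fin.snoc_last, Fin.snoc_last]
  | cast l' =>
      rw [Fin.castSucc_succAbove_castSucc, Fin.snoc_castSucc, Fin.snoc_castSucc]
      rfl

lemma inner_stdControl_eq_zero {E : Type*} [NormedAddCommGroup E] [InnerProductSpace ℝ E]
    {k : ℕ} (w : Fin (k + 1) → E) (u : E) (m : Fin (k + 1)) :
    ⟪w m, stdControl w u⟫ = 0 := by
  set B : Matrix (Fin (k + 2)) (Fin (k + 2)) ℝ :=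
    Matrix.of fun i j =>
      ⟪(Fin.snoc w u : Fin (k + 2) → E) j, (Fin.snoc w (w m) : Fin (k + 2) → E) i⟫ with hBdef
  have hB0 : B.det = 0 := by
    apply Matrix.det_zero_of_row_eq (Fin.castSucc_lt_last m).ne
    funext j
    simp [hBdef]
  have key : ⟪w m, stdControl w u⟫ = B.det := by
    rw [Matrix.det_succ_row B (Fin.last (k + 1)), Fin.sum_univ_castSucc,
      stdControl, inner_add_right, inner_sum]
    congr 1
    · refine Finset.sum_congr rfl fun i _ => ?_
      have hsub : B.submatrix (Fin.last (k + 1)).succAbove (Fin.castSucc i).succAbove =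
          sigmaMat w (Fin.snoc (w ∘ i.succAbove) u) := by
        ext a b
        simp only [Matrix.submatrix_apply, Fin.succAbove_last, hBdef, Matrix.of_apply,
          sigmaMat, Fin.snoc_castSucc, snoc_comp_succAbove_castSucc]
      rw [hsub, real_inner_smul_right]
      simp only [hBdef, Matrix.of_apply, Fin.snoc_castSucc, Fin.snoc_last,
        Fin.val_last, Fin.coe_castSucc]
      rw [real_inner_comm (w m) (w i)]
      ring_nf
    · have hsub : B.submatrix (Fin.last (k + 1)).succAbove (Fin.last (k + 1)).succAbove =
          sigmaMat w w := by
        ext a b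
        simp only [Matrix.submatrix_apply, Fin.succAbove_last, hBdef, Matrix.of_apply,
          sigmaMat, Fin.snoc_castSucc]
      rw [hsub, real_inner_smul_right]
      simp only [hBdef, Matrix.of_apply, Fin.snoc_last, Fin.val_last]
      rw [real_inner_comm (w m) u]
      have : ((-1 : ℝ)) ^ (k + 1 + (k + 1)) = 1 := by
        rw [show k + 1 + (k + 1) = 2 * (k + 1) by ring, pow_mul]
        norm_num
      rw [this]
      ring
  rw [key, hB0]

/-- orthogonal projection formulation: `v₀(w,u)` equals the Gram determinant of
the `w`'\''s times the orthogonal projection of `u` onto the orthogonal complement of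
`span{w₁,…,w_{k+1}}`. -/
theorem stdControl_eq_gramDet_smul_orthogonalProjection
    {E : Type*} [NormedAddCommGroup E] [InnerProductSpace ℝ E] [FiniteDimensional ℝ E]
    {k : ℕ} (w : Fin (k + 1) → E) (u : E) :
    stdControl w u =
      (sigmaMat w w).det •
        ((Submodule.orthogonalProjectionOnto (Submodule.span ℝ (Set.range w))ᗮ u : E)) := by
  set V : Submodule ℝ E := Submodule.span ℝ (Set.range w) with hV
  have hmem : stdControl w u ∈ Vᗮ := by
    rw [Submodule.mem_orthogonal]
    intro x hx
    induction hx using Submodule.span_induction with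
    | mem x hx =>
        obtain ⟨m, rfl⟩ := hx
        exact inner_stdControl_eq_zero w u m
    | zero => simp
    | add x y _ _ hx hy => rw [inner_add_left, hx, hy, add_zero]
    | smul c x _ hx => rw [real_inner_smul_left, hx, mul_zero]
  set s : E := ∑ i : Fin (k + 1),
      ((-1 : ℝ) ^ ((i : ℕ) + k + 1) *
        (sigmaMat w (Fin.snoc (w ∘ i.succAbove) u)).det) • w i with hs
  have hsV : s ∈ V := by
    refine Submodule.sum_mem _ fun i _ => Submodule.smul_mem _ _ ?_
    exact Submodule.subset_span (Set.mem_range_self i)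
  have hproj_s : Submodule.orthogonalProjectionOnto Vᗮ s = 0 :=
    Submodule.orthogonalProjectionOnto_apply_of_mem_orthogonal
      (V.le_orthogonal_orthogonal hsV)
  have hdecomp : stdControl w u = s + (sigmaMat w w).det • u := rfl
  calc stdControl w u
      = (Submodule.orthogonalProjectionOnto Vᗮ (stdControl w u) : E) :=
        (Submodule.starProjection_eq_self_iff.mpr hmem).symm
    _ = (Submodule.orthogonalProjectionOnto Vᗮ (s + (sigmaMat w w).det • u) : E) := by rw [← hdecomp]
    _ = (sigmaMat w w).det • ((Submodule.orthogonalProjectionOnto Vᗮ u : E)) := by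
        rw [map_add, map_smul, hproj_s]
        simp
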